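/- For the A_{2n}^{(1)} system with F_j = f_j(Σ_{r=1}^n f_{j+2r-1} - Σ_{r=1}^n f_{j+2r}) + α_j (indices mod 2n+1), the Demazure-type identity Δ_1(F_0) = F_1/f_1² holds, where Δ_1(φ) = (s_1(φ) - φ)/α_1 and s_1 is the Bäcklund transformation. -/

import Mathlib

open MvPolynomial

set_option maxHeartbeats 1000000
set_option synthInstance.maxHeartbeats 1000000

noncomputable section

/-- The field `ℂ(α₀,…,α_l; f₀,…,f_l)` of rational functions. -/
abbrev K (l : ℕ) : Type := FractionRing (MvPolynomial (Fin (l+1) ⊕ Fin (l+1)) ℂ)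

/-- The generator `α_i`. -/
def av (l : ℕ) (i : Fin (l+1)) : K l :=
  algebraMap (MvPolynomial (Fin (l+1) ⊕ Fin (l+1)) ℂ) (K l) (X (Sum.inl i))

/-- The generator `f_i`. -/
def fv (l : ℕ) (i : Fin (l+1)) : K l :=
  algebraMap (MvPolynomial (Fin (l+1) ⊕ Fin (l+1)) ℂ) (K l) (X (Sum.inr i))

/-- `s` is the Bäcklund transformation `s_i`. -/
def IsBT (l : ℕ) (i : Fin (l+1)) (s : K l ≃+* K l) : Prop :=
  s (av l i) = - av l i ∧
  s (av l (i+1)) = av l (i+1) + av l i ∧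
  s (av l (i-1)) = av l (i-1) + av l i ∧
  (∀ j : Fin (l+1), j ≠ i → j ≠ i+1 → j ≠ i-1 → s (av l j) = av l j) ∧
  s (fv l i) = fv l i ∧
  s (fv l (i+1)) = fv l (i+1) + av l i / fv l i ∧
  s (fv l (i-1)) = fv l (i-1) - av l i / fv l i ∧
  (∀ j : Fin (l+1), j ≠ i → j ≠ i+1 → j ≠ i-1 → s (fv l j) = fv l j)


open Fin.NatCast in
/-- Right-hand side of the `A_{2n}⁽¹⁾` system:
`F_j = f_j (Σ_{r=1}^n f_{j+2r-1} - Σ_{r=1}^n f_{j+2r}) + α_j` (indices mod `2n+1`). -/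
def F2n (n : ℕ) (j : Fin (2*n+1)) : K (2*n) :=
  fv (2*n) j *
    ((∑ r ∈ Finset.range n, fv (2*n) (j + ((2*r+1 : ℕ) : Fin (2*n+1)))) -
      ∑ r ∈ Finset.range n, fv (2*n) (j + ((2*r+2 : ℕ) : Fin (2*n+1)))) +
  av (2*n) j

open Fin.NatCast Fin.CommRing in
/-- The Demazure-type identity `Δ₁(F₀) = F₁ / f₁²` where `Δ₁(φ) = (s₁(φ) - φ)/α₁`. -/
theorem stmt5 (n : ℕ) (hn : 1 ≤ n) (s : K (2*n) ≃+* K (2*n)) (hs : IsBT (2*n) 1 s) :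
    (s (F2n n 0) - F2n n 0) / av (2*n) 1 = F2n n 1 / (fv (2*n) 1)^2 := by
  obtain ⟨m, rfl⟩ : ∃ m, n = m + 1 := ⟨n - 1, by omega⟩
  clear hn
  have hinj : Function.Injective
      (algebraMap (MvPolynomial (Fin (2*(m+1)+1) ⊕ Fin (2*(m+1)+1)) ℂ) (K (2*(m+1)))) :=
    IsFractionRing.injective _ _
  have ha1 : av (2*(m+1)) 1 ≠ 0 := by
    simp only [av, ne_eq, map_eq_zero_iff _ hinj]
    exact X_ne_zero _
  have hf1 : fv (2*(m+1)) 1 ≠ 0 := by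
    simp only [fv, ne_eq, map_eq_zero_iff _ hinj]
    exact X_ne_zero _
  -- basic Fin facts
  have h2 : (1 : Fin (2*(m+1)+1)) + 1 = 2 := one_add_one_eq_two
  have h0 : (1 : Fin (2*(m+1)+1)) - 1 = 0 := sub_self 1
  have cast_inj : ∀ a b : ℕ, a < 2*(m+1)+1 → b < 2*(m+1)+1 →
      (((a : ℕ) : Fin (2*(m+1)+1)) = ((b : ℕ) : Fin (2*(m+1)+1)) ↔ a = b) := by
    intro a b ha hb
    rw [Fin.ext_iff, Fin.val_natCast, Fin.val_natCast,
      Nat.mod_eq_of_lt ha, Nat.mod_eq_of_lt hb]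
  obtain ⟨_, _, ha0, _, hsf1, hsf2, hsf0, hfj⟩ := hs
  rw [h2] at hsf2
  rw [h0] at hsf0 ha0
  -- the fixed generators
  have hfix : ∀ a : ℕ, 3 ≤ a → a < 2*(m+1)+1 → s (fv (2*(m+1)) ((a : ℕ) : Fin (2*(m+1)+1)))
      = fv (2*(m+1)) ((a : ℕ) : Fin (2*(m+1)+1)) := by
    intro a h3 hlt
    refine hfj _ ?_ ?_ ?_
    · rw [ne_eq, show (1 : Fin (2*(m+1)+1)) = ((1:ℕ) : Fin (2*(m+1)+1)) by norm_num,
        cast_inj a 1 hlt (by omega)]; omega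
    · rw [h2, ne_eq, show (2 : Fin (2*(m+1)+1)) = ((2:ℕ) : Fin (2*(m+1)+1)) by norm_num,
        cast_inj a 2 hlt (by omega)]; omega
    · rw [h0, ne_eq, show (0 : Fin (2*(m+1)+1)) = ((0:ℕ) : Fin (2*(m+1)+1)) by norm_num,
        cast_inj a 0 hlt (by omega)]; omega
  set R : K (2*(m+1)) := ∑ r ∈ Finset.range m, fv (2*(m+1)) ((2*r+3 : ℕ)) with hR
  set R' : K (2*(m+1)) := ∑ r ∈ Finset.range m, fv (2*(m+1)) ((2*r+4 : ℕ)) with hR'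
  have hsR : s R = R := by
    rw [hR, map_sum]
    refine Finset.sum_congr rfl fun r hr => ?_
    exact hfix _ (by omega) (by simp at hr; omega)
  have hsR' : s R' = R' := by
    rw [hR', map_sum]
    refine Finset.sum_congr rfl fun r hr => ?_
    exact hfix _ (by omega) (by simp at hr; omega)
  -- peel the sums
  have hs01 : (∑ r ∈ Finset.range (m+1),
      fv (2*(m+1)) ((0 : Fin (2*(m+1)+1)) + ((2*r+1 : ℕ) : Fin (2*(m+1)+1))))
      = R + fv (2*(m+1)) 1 := by
    rw [Finset.sum_range_succ', hR]
    congr 1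
    · exact Finset.sum_congr rfl fun r _ => by congr 1; push_cast; ring
  have hs02 : (∑ r ∈ Finset.range (m+1),
      fv (2*(m+1)) ((0 : Fin (2*(m+1)+1)) + ((2*r+2 : ℕ) : Fin (2*(m+1)+1))))
      = R' + fv (2*(m+1)) 2 := by
    rw [Finset.sum_range_succ', hR']
    congr 1
    · exact Finset.sum_congr rfl fun r _ => by congr 1; push_cast; ring
  have hs11 : (∑ r ∈ Finset.range (m+1),
      fv (2*(m+1)) ((1 : Fin (2*(m+1)+1)) + ((2*r+1 : ℕ) : Fin (2*(m+1)+1))))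
      = R' + fv (2*(m+1)) 2 := by
    rw [Finset.sum_range_succ', hR']
    congr 1
    · exact Finset.sum_congr rfl fun r _ => by congr 1; push_cast; ring
  have hs12 : (∑ r ∈ Finset.range (m+1),
      fv (2*(m+1)) ((1 : Fin (2*(m+1)+1)) + ((2*r+2 : ℕ) : Fin (2*(m+1)+1))))
      = R + fv (2*(m+1)) 0 := by
    rw [Finset.sum_range_succ, hR]
    congr 1
    · exact Finset.sum_congr rfl fun r _ => by congr 1; push_cast; ring
    · congr 1
      have hz : ((2*(m+1)+1 : ℕ) : Fin (2*(m+1)+1)) = 0 := Fin.natCast_self _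
      rw [← hz]; push_cast; ring
  have hF0 : F2n (m+1) 0 = fv (2*(m+1)) 0 * ((R + fv (2*(m+1)) 1) - (R' + fv (2*(m+1)) 2))
      + av (2*(m+1)) 0 := by
    rw [F2n, hs01, hs02]
  have hF1 : F2n (m+1) 1 = fv (2*(m+1)) 1 * ((R' + fv (2*(m+1)) 2) - (R + fv (2*(m+1)) 0))
      + av (2*(m+1)) 1 := by
    rw [F2n, hs11, hs12]
  rw [hF0, hF1]
  rw [map_add, map_mul, map_sub, map_add, map_add, hsR, hsR', hsf0, hsf1, hsf2, ha0]
  field_simp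
  ring
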